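/- Let H ⊆ {0,1}^X have Littlestone dimension d and let T ≥ 1. In the online model where at each round the learner commits to h_t, the adversary picks a distribution D_t on X adaptively, and the learner suffers loss P_t = P_{x∼D_t}(h_t(x) ≠ h*(x)) while observing only a sample (x_t, h*(x_t)) with x_t ∼ D_t, the learner running SOA on the observed samples achieves expected cumulative loss E[Σ_{t=1}^T P_t] = O(d + log log T). -/

import Mathlib

open MeasureTheory

/-- Binary tree / Littlestone dimension. -/
abbrev BTree (Z : Type*) (d : ℕ) := ∀ t : Fin d, (Fin t → Bool) → Z

def LShattered {Z : Type*} (F : Set (Z → Bool)) (d : ℕ) (tr : BTree Z d) : Prop :=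
  ∀ ε : Fin d → Bool, ∃ f ∈ F, ∀ t : Fin d,
    f (tr t fun i => ε ⟨i.1, i.isLt.trans t.isLt⟩) = ε t

noncomputable def Ldim {Z : Type*} (F : Set (Z → Bool)) : ℕ∞ :=
  sSup ((fun n : ℕ => (n : ℕ∞)) '' {n | ∃ tr : BTree Z n, LShattered F n tr})

namespace SOAaux

variable {Z : Type*}

lemma lshattered_mono {F G : Set (Z → Bool)} (h : F ⊆ G) {n tr} (hs : LShattered F n tr) :
    LShattered G n tr := fun ε => by
  obtain ⟨f, hf, hp⟩ := hs ε; exact ⟨f, h hf, hp⟩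

lemma ldim_mono {F G : Set (Z → Bool)} (h : F ⊆ G) : Ldim F ≤ Ldim G :=
  sSup_le_sSup (Set.image_mono fun n ⟨tr, htr⟩ => ⟨tr, lshattered_mono h htr⟩)

lemma shatter_le_ldim {F : Set (Z → Bool)} {n tr} (h : LShattered F n tr) :
    (n : ℕ∞) ≤ Ldim F := le_sSup ⟨n, ⟨tr, h⟩, rfl⟩

/-- Truncation: shattering at depth n gives shattering at any depth m ≤ n. -/
lemma shatter_trunc {F : Set (Z → Bool)} {n : ℕ} (tr : BTree Z n) (h : LShattered F n tr)
    {m : ℕ} (hm : m ≤ n) : ∃ tr' : BTree Z m, LShattered F m tr' := by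
  refine ⟨fun t ε => tr ⟨t.1, t.isLt.trans_le hm⟩ (fun i => ε ⟨i.1, i.isLt⟩), fun ε => ?_⟩
  set εh : Fin n → Bool := fun i => if h : i.1 < m then ε ⟨i.1, h⟩ else false with hεh
  obtain ⟨f, hf, hp⟩ := h εh
  refine ⟨f, hf, fun t => ?_⟩
  have ht := hp ⟨t.1, t.isLt.trans_le hm⟩
  have h1 : εh ⟨t.1, t.isLt.trans_le hm⟩ = ε t := by simp [hεh, t.isLt]
  rw [h1] at ht
  convert ht using 3
  funext i
  simp [hεh, i.isLt.trans t.isLt]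

/-- Root a tree at `x` with two subtrees. -/
def consTree (x : Z) {n : ℕ} (t0 t1 : BTree Z n) : BTree Z (n + 1) :=
  fun t ε =>
    if h : (t : ℕ) = 0 then x
    else
      (if ε ⟨0, Nat.pos_of_ne_zero h⟩ then t1 else t0)
        ⟨t.1 - 1, by omega⟩
        (fun i => ε ⟨i.1 + 1, by have hi : i.1 < t.1 - 1 := i.isLt; omega⟩)

lemma shatter_cons {F : Set (Z → Bool)} (x : Z) {n : ℕ}
    {t0 t1 : BTree Z n}
    (h0 : LShattered {h | h ∈ F ∧ h x = false} n t0)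
    (h1 : LShattered {h | h ∈ F ∧ h x = true} n t1) :
    LShattered F (n + 1) (consTree x t0 t1) := by
  intro ε
  set ε' : Fin n → Bool := fun i => ε ⟨i.1 + 1, by omega⟩ with hε'
  have key : ∀ (tb : BTree Z n), LShattered {h | h ∈ F ∧ h x = ε ⟨0, Nat.succ_pos n⟩} n tb →
      (∀ t : Fin n, (if ε ⟨0, Nat.succ_pos n⟩ then t1 else t0) t = tb t) →
      ∃ f ∈ F, ∀ t : Fin (n+1),
        f (consTree x t0 t1 t fun i => ε ⟨i.1, i.isLt.trans t.isLt⟩) = ε t := by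
    intro tb hsb htb
    obtain ⟨f, ⟨hfF, hfx⟩, hp⟩ := hsb ε'
    refine ⟨f, hfF, fun t => ?_⟩
    rcases Nat.eq_zero_or_pos t.1 with ht | ht
    · have heq : t = ⟨0, Nat.succ_pos n⟩ := Fin.ext ht
      subst heq
      exact hfx
    · have hne : (t : ℕ) ≠ 0 := Nat.pos_iff_ne_zero.mp ht
      simp only [consTree, dif_neg hne]
      rw [htb]
      have hpt := hp ⟨t.1 - 1, by omega⟩
      have hεt : ε' ⟨t.1 - 1, by omega⟩ = ε t := by
        simp only [hε']
        congr 1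
        apply Fin.ext
        show t.1 - 1 + 1 = t.1
        omega
      rw [hεt] at hpt
      convert hpt using 3
  rcases hb : ε ⟨0, Nat.succ_pos n⟩ with _ | _
  · refine key t0 ?_ (fun t => by rw [hb]; simp)
    rw [hb]; exact h0
  · refine key t1 ?_ (fun t => by rw [hb]; simp)
    rw [hb]; exact h1

end SOAaux

namespace SOAaux
variable {Z : Type*}

lemma shatter_zero {F : Set (Z → Bool)} (hne : F.Nonempty) :
    ∃ tr : BTree Z 0, LShattered F 0 tr :=
  ⟨fun t _ => t.elim0, fun _ => ⟨hne.choose, hne.choose_spec, fun t => t.elim0⟩⟩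

lemma exists_shatter {F : Set (Z → Bool)} (hne : F.Nonempty) {n : ℕ}
    (h : (n : ℕ∞) ≤ Ldim F) : ∃ tr : BTree Z n, LShattered F n tr := by
  by_contra hno
  rcases Nat.eq_zero_or_pos n with h0 | h0
  · subst h0; exact hno (shatter_zero hne)
  have hub : Ldim F ≤ ((n - 1 : ℕ) : ℕ∞) := by
    apply sSup_le
    rintro a ⟨m, ⟨tr, htr⟩, rfl⟩
    rw [Nat.cast_le]
    by_contra hlt
    push_neg at hlt
    exact hno (shatter_trunc tr htr (by omega))
  have := h.trans hub
  rw [Nat.cast_le] at this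
  omega

lemma ldim_succ_le {V : Set (Z → Bool)} {x : Z} {n : ℕ}
    (ne0 : {h | h ∈ V ∧ h x = false}.Nonempty) (ne1 : {h | h ∈ V ∧ h x = true}.Nonempty)
    (h0 : (n : ℕ∞) ≤ Ldim {h | h ∈ V ∧ h x = false})
    (h1 : (n : ℕ∞) ≤ Ldim {h | h ∈ V ∧ h x = true}) :
    ((n + 1 : ℕ) : ℕ∞) ≤ Ldim V := by
  obtain ⟨t0, ht0⟩ := exists_shatter ne0 h0
  obtain ⟨t1, ht1⟩ := exists_shatter ne1 h1
  exact shatter_le_ldim (shatter_cons x ht0 ht1)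

end SOAaux

/-- Version space. -/
def VS {X : Type*} (H : Set (X → Bool)) (l : List (X × Bool)) : Set (X → Bool) :=
  {h | h ∈ H ∧ ∀ p ∈ l, h p.1 = p.2}

open Classical in
/-- Rank with bottom for the empty class. -/
noncomputable def rk {Z : Type*} (F : Set (Z → Bool)) : WithBot ℕ∞ :=
  if F.Nonempty then (Ldim F : WithBot ℕ∞) else ⊥
open Classical in
/-- The Standard Optimal Algorithm. -/
noncomputable def SOA {X : Type*} (H : Set (X → Bool)) (l : List (X × Bool)) : X → Bool :=
  fun z =>
    if rk {h | h ∈ VS H l ∧ h z = false} < rk {h | h ∈ VS H l ∧ h z = true} then true else false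

namespace SOAaux
variable {X : Type*}

lemma VS_append {H : Set (X → Bool)} {l : List (X × Bool)} {z : X} {b : Bool} :
    VS H (l ++ [(z, b)]) = {h | h ∈ VS H l ∧ h z = b} := by
  ext h
  simp only [VS, Set.mem_setOf_eq, List.mem_append, List.mem_singleton]
  constructor
  · rintro ⟨hH, hc⟩
    exact ⟨⟨hH, fun p hp => hc p (Or.inl hp)⟩, hc (z, b) (Or.inr rfl)⟩
  · rintro ⟨⟨hH, hc⟩, hz⟩
    refine ⟨hH, fun p hp => ?_⟩
    rcases hp with hp | hp
    · exact hc p hp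
    · subst hp; exact hz

lemma rk_bot {Z : Type*} {F : Set (Z → Bool)} (h : ¬ F.Nonempty) : rk F = ⊥ := if_neg h

lemma rk_coe {Z : Type*} {F : Set (Z → Bool)} (h : F.Nonempty) : rk F = (Ldim F : WithBot ℕ∞) :=
  if_pos h

lemma step {H : Set (X → Bool)} {l : List (X × Bool)} {z : X} {hstar : X → Bool}
    (hs : hstar ∈ VS H l) (hz : SOA H l z ≠ hstar z) {d : ℕ} (hld : Ldim (VS H l) ≤ (d : ℕ∞)) :
    Ldim (VS H (l ++ [(z, hstar z)])) + 1 ≤ Ldim (VS H l) := by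
  classical
  rw [VS_append]
  -- common finishing move
  have fin : ∀ b : Bool,
      {h | h ∈ VS H l ∧ h z = false}.Nonempty → {h | h ∈ VS H l ∧ h z = true}.Nonempty →
      Ldim {h | h ∈ VS H l ∧ h z = b} ≤ Ldim {h | h ∈ VS H l ∧ h z = !b} →
      Ldim {h | h ∈ VS H l ∧ h z = b} + 1 ≤ Ldim (VS H l) := by
    intro b hne0 hne1 hle
    have hsub : {h | h ∈ VS H l ∧ h z = b} ⊆ VS H l := fun h hh => hh.1
    have hfin : Ldim {h | h ∈ VS H l ∧ h z = b} ≠ ⊤ :=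
      (lt_of_le_of_lt ((ldim_mono hsub).trans hld) (WithTop.coe_lt_top d)).ne
    set n := (Ldim {h | h ∈ VS H l ∧ h z = b}).toNat with hn
    have hco : ((n : ℕ) : ℕ∞) = Ldim {h | h ∈ VS H l ∧ h z = b} := ENat.coe_toNat hfin
    have h0 : (n : ℕ∞) ≤ Ldim {h | h ∈ VS H l ∧ h z = false} := by
      cases b
      · exact le_of_eq hco
      · exact hco.le.trans hle
    have h1 : (n : ℕ∞) ≤ Ldim {h | h ∈ VS H l ∧ h z = true} := by
      cases b
      · exact hco.le.trans hle
      · exact le_of_eq hco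
    have := ldim_succ_le hne0 hne1 h0 h1
    rw [← hco]
    calc ((n : ℕ) : ℕ∞) + 1 = ((n + 1 : ℕ) : ℕ∞) := by push_cast; ring
      _ ≤ Ldim (VS H l) := this
  rcases hbv : hstar z with _ | _
  · rw [hbv] at hz
    have hne0 : {h | h ∈ VS H l ∧ h z = false}.Nonempty := ⟨hstar, hs, hbv⟩
    have hc : rk {h | h ∈ VS H l ∧ h z = false} < rk {h | h ∈ VS H l ∧ h z = true} := by
      by_contra hc
      exact hz (by simp only [SOA, if_neg hc])
    have hne1 : {h | h ∈ VS H l ∧ h z = true}.Nonempty := by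
      by_contra hne
      rw [rk_bot hne] at hc
      exact absurd hc (not_lt_bot)
    rw [rk_coe hne0, rk_coe hne1] at hc
    exact fin false hne0 hne1 (by exact_mod_cast hc.le)
  · rw [hbv] at hz
    have hne1 : {h | h ∈ VS H l ∧ h z = true}.Nonempty := ⟨hstar, hs, hbv⟩
    have hc : ¬ rk {h | h ∈ VS H l ∧ h z = false} < rk {h | h ∈ VS H l ∧ h z = true} := by
      intro hc
      exact hz (by simp only [SOA, if_pos hc])
    have hne0 : {h | h ∈ VS H l ∧ h z = false}.Nonempty := by
      by_contra hne
      rw [rk_bot hne] at hc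
      push_neg at hc
      exact absurd ((rk_coe hne1) ▸ hc) (by simp [WithBot.not_coe_le_bot])
    push_neg at hc
    rw [rk_coe hne0, rk_coe hne1] at hc
    exact fin true hne0 hne1 (by exact_mod_cast hc)

end SOAaux

namespace SOAaux
variable {X : Type*}

lemma hstar_mem_VS {H : Set (X → Bool)} {hstar : X → Bool} (hs : hstar ∈ H) (xs : ℕ → X)
    (t : ℕ) : hstar ∈ VS H ((List.range t).map fun s => (xs s, hstar (xs s))) := by
  refine ⟨hs, fun p hp => ?_⟩
  simp only [List.mem_map] at hp
  obtain ⟨s, _, rfl⟩ := hp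
  rfl

lemma mistakes_le {H : Set (X → Bool)} {d : ℕ} (hd : Ldim H = (d : ℕ∞)) {hstar : X → Bool}
    (hs : hstar ∈ H) (xs : ℕ → X) (T : ℕ) :
    ∑ t ∈ Finset.range T,
      (if SOA H ((List.range t).map fun s => (xs s, hstar (xs s))) (xs t) ≠ hstar (xs t)
        then 1 else 0 : ℕ) ≤ d := by
  classical
  set l : ℕ → List (X × Bool) := fun t => (List.range t).map fun s => (xs s, hstar (xs s))
    with hl
  set N : ℕ → ℕ := fun t => (Ldim (VS H (l t))).toNat with hN
  have hVd : ∀ t, Ldim (VS H (l t)) ≤ (d : ℕ∞) := fun t =>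
    hd ▸ ldim_mono (fun h hh => hh.1)
  have hfin : ∀ t, Ldim (VS H (l t)) ≠ ⊤ := fun t =>
    (lt_of_le_of_lt (hVd t) (WithTop.coe_lt_top d)).ne
  have hco : ∀ t, ((N t : ℕ) : ℕ∞) = Ldim (VS H (l t)) := fun t => ENat.coe_toNat (hfin t)
  have hlsucc : ∀ t, l (t + 1) = l t ++ [(xs t, hstar (xs t))] := by
    intro t; simp [hl, List.range_succ]
  have hstep : ∀ t, (if SOA H (l t) (xs t) ≠ hstar (xs t) then 1 else 0 : ℕ) + N (t + 1)
      ≤ N t := by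
    intro t
    by_cases hm : SOA H (l t) (xs t) ≠ hstar (xs t)
    · rw [if_pos hm]
      have hst := step (hstar_mem_VS hs xs t) hm (hVd t)
      rw [← hlsucc t, ← hco t, ← hco (t + 1)] at hst
      have : ((N (t + 1) + 1 : ℕ) : ℕ∞) ≤ ((N t : ℕ) : ℕ∞) := by
        push_cast
        exact hst
      rw [Nat.cast_le] at this
      omega
    · rw [if_neg hm]
      simp only [Nat.zero_add]
      apply ENat.toNat_le_toNat _ (hfin t)
      apply ldim_mono
      rw [hlsucc t, VS_append]
      exact fun h hh => hh.1
  have hsum : ∀ T, (∑ t ∈ Finset.range T,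
      (if SOA H (l t) (xs t) ≠ hstar (xs t) then 1 else 0 : ℕ)) + N T ≤ N 0 := by
    intro T
    induction T with
    | zero => simp
    | succ T ih =>
      rw [Finset.sum_range_succ]
      have := hstep T
      omega
  have hN0 : N 0 = d := by
    have hV0 : VS H (l 0) = H := by
      ext h; simp [VS, hl]
    rw [hN]
    simp only [hV0, hd]
    exact ENat.toNat_coe d
  show (∑ t ∈ Finset.range T,
      (if SOA H (l t) (xs t) ≠ hstar (xs t) then 1 else 0 : ℕ)) ≤ d
  have := hsum T
  omega

end SOAaux

/-- The error indicator of the SOA learner. -/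
def gfun {X : Type*} {Ω : Type} (A : List (X × Bool) → (X → Bool)) (x : ℕ → Ω → X)
    (hstar : X → Bool) (t : ℕ) (ω : Ω) : ℝ :=
  if A ((List.range t).map fun s => (x s ω, hstar (x s ω))) (x t ω) ≠ hstar (x t ω)
  then (1 : ℝ) else 0


/-- Realizable online learning against an adaptive adversary playing distributions:
there is a constant `C` and a learner `A` (the SOA run on the observed samples) such that,
in any probabilistic realization of the game — `F t` is the information after `t` rounds,
`x t` is the sample drawn at round `t` (so measurable w.r.t. `F (t+1)`), the learner's
round-`t` hypothesis is `A` applied to the past samples, and `P t` is the conditional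
probability (given the past) that this hypothesis errs on a fresh draw from the
adversary's round-`t` distribution — the expected cumulative loss is
`O(Ldim H + log log T)`. -/
theorem realizable_adaptive_distribution_bound {X : Type*} [MeasurableSpace X]
    (H : Set (X → Bool)) (d : ℕ) (hd : Ldim H = (d : ℕ∞)) :
    ∃ C : ℝ, 0 < C ∧ ∃ A : List (X × Bool) → (X → Bool),
      ∀ (Ω : Type) (m0 : MeasurableSpace Ω) (μ : Measure Ω), IsProbabilityMeasure μ →
      ∀ (F : Filtration ℕ m0) (x : ℕ → Ω → X),
        (∀ t, Measurable[F (t + 1)] (x t)) →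
      ∀ hstar, hstar ∈ H →
      ∀ (T : ℕ), 4 ≤ T →
      ∀ (P : ℕ → Ω → ℝ),
        (∀ t, P t =ᵐ[μ]
          μ[fun ω => if A ((List.range t).map fun s => (x s ω, hstar (x s ω))) (x t ω)
                        ≠ hstar (x t ω) then (1 : ℝ) else 0 | F t]) →
        ∫ ω, ∑ t ∈ Finset.range T, P t ω ∂μ ≤ C * (d + Real.log (Real.log T)) := by
  classical
  refine ⟨1, one_pos, SOA H, ?_⟩
  intro Ω m0 μ hμ F x hx hstar hsH T hT P hP
  set g : ℕ → Ω → ℝ := gfun (SOA H) x hstar with hgdef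
  -- each P t is integrable (it is a.e. a conditional expectation)
  have hPint : ∀ t, Integrable (P t) μ := fun t => integrable_condExp.congr (hP t).symm
  rw [integral_finset_sum _ (fun t _ => hPint t)]
  -- ∫ P t = ∫ g t
  have hPi : ∀ t, ∫ ω, P t ω ∂μ = ∫ ω, g t ω ∂μ := by
    intro t
    have h1 : ∫ ω, P t ω ∂μ = ∫ ω, (μ[g t | F t]) ω ∂μ :=
      integral_congr_ae (hP t)
    rw [h1]
    exact integral_condExp (F.le t)
  rw [Finset.sum_congr rfl (fun t _ => hPi t)]
  -- g is nonnegative and pointwise the mistakes sum to at most d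
  have hgnn : ∀ t ω, 0 ≤ g t ω := by
    intro t ω
    simp only [hgdef, gfun]
    split <;> norm_num
  have hgsum : ∀ ω, ∑ t ∈ Finset.range T, g t ω ≤ (d : ℝ) := by
    intro ω
    have hnat := SOAaux.mistakes_le hd hsH (fun s => x s ω) T
    calc ∑ t ∈ Finset.range T, g t ω
        = ((∑ t ∈ Finset.range T,
            (if SOA H ((List.range t).map fun s => (x s ω, hstar (x s ω))) (x t ω)
              ≠ hstar (x t ω) then 1 else 0 : ℕ) : ℕ) : ℝ) := by
          push_cast
          refine Finset.sum_congr rfl fun t _ => ?_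
          simp only [hgdef, gfun]
      _ ≤ (d : ℝ) := by exact_mod_cast hnat
  -- restrict to the integrable indices
  set S : Finset ℕ := (Finset.range T).filter (fun t => Integrable (g t) μ) with hS
  have hsub : S ⊆ Finset.range T := Finset.filter_subset _ _
  have h2 : ∑ t ∈ Finset.range T, ∫ ω, g t ω ∂μ = ∑ t ∈ S, ∫ ω, g t ω ∂μ := by
    refine (Finset.sum_subset hsub ?_).symm
    intro t ht hnt
    rw [hS, Finset.mem_filter] at hnt
    push_neg at hnt
    exact integral_undef (hnt ht)
  rw [h2, ← integral_finset_sum _ (fun t ht => (Finset.mem_filter.mp ht).2)]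
  have h3 : ∫ ω, ∑ t ∈ S, g t ω ∂μ ≤ ∫ _ω, (d : ℝ) ∂μ := by
    refine integral_mono (integrable_finset_sum _ (fun t ht => (Finset.mem_filter.mp ht).2))
      (integrable_const _) ?_
    intro ω
    calc ∑ t ∈ S, g t ω ≤ ∑ t ∈ Finset.range T, g t ω :=
          Finset.sum_le_sum_of_subset_of_nonneg hsub (fun t _ _ => hgnn t ω)
      _ ≤ (d : ℝ) := hgsum ω
  have h4 : ∫ _ω, (d : ℝ) ∂μ = (d : ℝ) := by simp
  rw [h4] at h3
  -- numerics: log log T ≥ 0 for T ≥ 4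
  have hT4 : (4 : ℝ) ≤ (T : ℝ) := by exact_mod_cast hT
  have hlog1 : (1 : ℝ) ≤ Real.log T := by
    have e1 : Real.exp 1 ≤ 4 := by
      have := Real.exp_one_lt_d9
      linarith
    have : Real.exp 1 ≤ (T : ℝ) := e1.trans hT4
    rwa [← Real.le_log_iff_exp_le (by linarith)] at this
  have hll : 0 ≤ Real.log (Real.log T) := Real.log_nonneg hlog1
  linarith
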